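/- arXiv:1205.0638 — 2 statements merged into one kernel-verified Lean document; each statement's English description precedes it below -/
import Mathlib

section
/- Let T have a Gamma(m-1, 1/α) distribution with m > 4 and α > 0. Then the mean squared error of the estimator m/T for α equals α² (m+6)/((m-2)(m-3)). -/
open MeasureTheory Real Set

lemma aux_integrable {s α : ℝ} (hs : -1 < s) (hα : 0 < α) :
    IntegrableOn (fun x : ℝ => x ^ s * Real.exp (-(α * x))) (Ioi 0) := by
  have := integrableOn_rpow_mul_exp_neg_mul_rpow (p := 1) hs zero_lt_one hα
  refine this.congr_fun (fun x hx => ?_) measurableSet_Ioi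
  simp only [Real.rpow_one, neg_mul]

lemma aux_integral {s α : ℝ} (hs : -1 < s) (hα : 0 < α) :
    ∫ x in Ioi (0:ℝ), x ^ s * Real.exp (-(α * x)) = (1 / α) ^ (s + 1) * Real.Gamma (s + 1) := by
  have := Real.integral_rpow_mul_exp_neg_mul_Ioi (a := s + 1) (r := α) (by linarith) hα
  simpa using this

/-- If `T ~ Gamma(m-1, 1/α)` with `m > 4`, the MSE of the MLE `m/T` for `α` is
`α² (m+6)/((m-2)(m-3))`. -/
theorem mse_mle_pareto_shape (m : ℕ) (hm : 4 < m) (α : ℝ) (hα : 0 < α) :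
    ∫ x in Ioi (0 : ℝ),
        ((m : ℝ) / x - α) ^ 2 *
          (x ^ ((m : ℝ) - 1 - 1) * Real.exp (-x / (1 / α)) /
            (Real.Gamma ((m : ℝ) - 1) * (1 / α) ^ ((m : ℝ) - 1))) =
      α ^ 2 * ((m : ℝ) + 6) / (((m : ℝ) - 2) * ((m : ℝ) - 3)) := by
  set n : ℝ := (m : ℝ) with hn
  have hm5 : (5:ℕ) ≤ m := hm
  have hn5 : (5:ℝ) ≤ n := by rw [hn]; exact_mod_cast hm5
  set C : ℝ := Real.Gamma (n - 1) * (1 / α) ^ (n - 1) with hC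
  have hCpos : 0 < C := by
    have : 0 < Real.Gamma (n - 1) := Real.Gamma_pos_of_pos (by linarith)
    positivity
  have key : ∀ x ∈ Ioi (0:ℝ),
      ((n : ℝ) / x - α) ^ 2 * (x ^ (n - 1 - 1) * Real.exp (-x / (1 / α)) / C)
      = (n ^ 2 * (x ^ (n - 4) * Real.exp (-(α * x)))
          - (2 * n * α) * (x ^ (n - 3) * Real.exp (-(α * x)))
          + α ^ 2 * (x ^ (n - 2) * Real.exp (-(α * x)))) / C := by
    intro x hx
    have hx0 : (0:ℝ) < x := hx
    have hexp : Real.exp (-x / (1 / α)) = Real.exp (-(α * x)) := by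
      congr 1; field_simp
    have h3 : x ^ (n - 3) = x ^ (n - 4) * x := by
      rw [show n - 3 = n - 4 + 1 by ring, Real.rpow_add hx0, Real.rpow_one]
    have h2 : x ^ (n - 2) = x ^ (n - 4) * x * x := by
      rw [show n - 2 = n - 4 + 1 + 1 by ring, Real.rpow_add hx0, Real.rpow_one,
        Real.rpow_add hx0, Real.rpow_one]
    rw [hexp, show n - 1 - 1 = n - 2 by ring, h2, h3]
    field_simp
    ring
  rw [setIntegral_congr_fun measurableSet_Ioi key]
  have i4 : IntegrableOn (fun x : ℝ => x ^ (n - 4) * Real.exp (-(α * x))) (Ioi 0) :=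
    aux_integrable (by linarith) hα
  have i3 : IntegrableOn (fun x : ℝ => x ^ (n - 3) * Real.exp (-(α * x))) (Ioi 0) :=
    aux_integrable (by linarith) hα
  have i2 : IntegrableOn (fun x : ℝ => x ^ (n - 2) * Real.exp (-(α * x))) (Ioi 0) :=
    aux_integrable (by linarith) hα
  have hsub : Integrable (fun x : ℝ => n ^ 2 * (x ^ (n - 4) * Real.exp (-(α * x)))
      - (2 * n * α) * (x ^ (n - 3) * Real.exp (-(α * x)))) (volume.restrict (Ioi 0)) :=
    (i4.const_mul _).sub (i3.const_mul _)
  rw [integral_div,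
    integral_add hsub (i2.const_mul _),
    integral_sub (i4.const_mul _) (i3.const_mul _),
    integral_const_mul, integral_const_mul, integral_const_mul,
    aux_integral (by linarith : (-1:ℝ) < n - 4) hα,
    aux_integral (by linarith : (-1:ℝ) < n - 3) hα,
    aux_integral (by linarith : (-1:ℝ) < n - 2) hα,
    show n - 4 + 1 = n - 3 by ring, show n - 3 + 1 = n - 2 by ring,
    show n - 2 + 1 = n - 1 by ring]
  have hia : (0:ℝ) < 1 / α := by positivity
  have e2 : (1/α) ^ (n - 2) = (1/α) ^ (n - 3) * (1/α) := by
    rw [show n - 2 = n - 3 + 1 by ring, Real.rpow_add hia, Real.rpow_one]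
  have e1 : (1/α) ^ (n - 1) = (1/α) ^ (n - 3) * (1/α) * (1/α) := by
    rw [show n - 1 = n - 3 + 1 + 1 by ring, Real.rpow_add hia, Real.rpow_one,
      Real.rpow_add hia, Real.rpow_one]
  have g2 : Real.Gamma (n - 2) = (n - 3) * Real.Gamma (n - 3) := by
    rw [show n - 2 = n - 3 + 1 by ring, Real.Gamma_add_one (by linarith : n - 3 ≠ 0)]
  have g1 : Real.Gamma (n - 1) = (n - 2) * ((n - 3) * Real.Gamma (n - 3)) := by
    rw [show n - 1 = n - 2 + 1 by ring, Real.Gamma_add_one (by linarith : n - 2 ≠ 0), g2]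
  have hGpos : 0 < Real.Gamma (n - 3) := Real.Gamma_pos_of_pos (by linarith)
  have hbpos : 0 < (1/α) ^ (n - 3) := by positivity
  rw [hC, e1, e2, g1, g2]
  have h1 : n - 2 ≠ 0 := by linarith
  have h2 : n - 3 ≠ 0 := by linarith
  field_simp
  ring
end

section
/- Let T_m denote the trial index at which the m-th record occurs in a sequence of i.i.d. continuous random variables. Then P(T_m = j) = (1/j!)·c(j-1, m-1) for j ≥ m, where c(n,k) is the unsigned Stirling number of the first kind defined by z(z+1)⋯(z+n-1) = Σ_k c(n,k) z^k. -/
open MeasureTheory ProbabilityTheory Finset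
open Equiv
open scoped ENNReal

/-- Unsigned Stirling numbers of the first kind: `z(z+1)⋯(z+n-1) = Σ_k c(n,k) z^k`,
via the standard recurrence `c(n+1,k+1) = n·c(n,k+1) + c(n,k)`. -/
def stirlingFirst : ℕ → ℕ → ℕ
  | 0, 0 => 1
  | 0, _ + 1 => 0
  | _ + 1, 0 => 0
  | n + 1, k + 1 => n * stirlingFirst n (k + 1) + stirlingFirst n k

namespace RecordAux

variable {n : ℕ}

/-- number of left-to-right minima ("records") of a permutation. -/
def recCount {n : ℕ} (τ : Equiv.Perm (Fin n)) : ℕ :=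
  (univ.filter fun i => ∀ i' < i, τ i < τ i').card

/-- remove the last position of a permutation of `Fin (n+1)`, relabelling
order-isomorphically. -/
def down (τ : Equiv.Perm (Fin (n + 1))) : Equiv.Perm (Fin n) :=
  (finSuccAboveOrderIso (Fin.last n)).toEquiv.trans
    ((τ.subtypeEquiv fun a => not_congr (EmbeddingLike.apply_eq_iff_eq τ).symm).trans
      (finSuccAboveOrderIso (τ (Fin.last n))).symm.toEquiv)

lemma succAbove_symm_val (v : Fin (n + 1)) (x : {w : Fin (n + 1) // w ≠ v}) :
    v.succAbove ((finSuccAboveOrderIso v).symm x) = (x : Fin (n + 1)) := by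
  conv_rhs => rw [← (finSuccAboveOrderIso v).apply_symm_apply x]
  rfl

lemma succAbove_down (τ : Equiv.Perm (Fin (n + 1))) (i : Fin n) :
    (τ (Fin.last n)).succAbove (down τ i) = τ i.castSucc := by
  show (τ (Fin.last n)).succAbove ((finSuccAboveOrderIso (τ (Fin.last n))).symm
    ((τ.subtypeEquiv fun a => not_congr (EmbeddingLike.apply_eq_iff_eq τ).symm)
      (finSuccAboveOrderIso (Fin.last n) i))) = τ i.castSucc
  rw [succAbove_symm_val]
  show τ ((finSuccAboveOrderIso (Fin.last n) i : Fin (n + 1))) = τ i.castSucc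
  rw [show ((finSuccAboveOrderIso (Fin.last n) i : Fin (n + 1))) = (Fin.last n).succAbove i from rfl,
    Fin.succAbove_last]

lemma down_lt_down_iff (τ : Equiv.Perm (Fin (n + 1))) {a b : Fin n} :
    down τ a < down τ b ↔ τ a.castSucc < τ b.castSucc := by
  rw [← succAbove_down τ a, ← succAbove_down τ b]
  exact (Fin.succAbove_lt_succAbove_iff).symm

lemma rec_castSucc_iff (τ : Equiv.Perm (Fin (n + 1))) (i : Fin n) :
    (∀ i' < i.castSucc, τ i.castSucc < τ i') ↔ ∀ i' < i, down τ i < down τ i' := by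
  constructor
  · intro h i' hi'
    rw [down_lt_down_iff]
    exact h _ (Fin.castSucc_lt_castSucc_iff.mpr hi')
  · intro h i' hi'
    have hne : i' ≠ Fin.last n := Fin.ne_last_of_lt (hi'.trans (Fin.castSucc_lt_last i))
    obtain ⟨i'', rfl⟩ := Fin.exists_castSucc_eq.mpr hne
    rw [← down_lt_down_iff]
    exact h _ (Fin.castSucc_lt_castSucc_iff.mp hi')
lemma rec_last_iff (τ : Equiv.Perm (Fin (n + 1))) :
    (∀ i' < Fin.last n, τ (Fin.last n) < τ i') ↔ τ (Fin.last n) = 0 := by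
  constructor
  · intro h
    by_contra h0
    have h1 : τ.symm 0 ≠ Fin.last n := by
      intro he
      exact h0 (by rw [← he, Equiv.apply_symm_apply])
    have h2 := h (τ.symm 0) (Fin.lt_last_iff_ne_last.mpr h1)
    rw [Equiv.apply_symm_apply] at h2
    exact Fin.not_lt_zero _ h2
  · intro h i' hi'
    rw [h]
    exact Fin.pos_iff_ne_zero.mpr fun he => (Fin.ne_last_of_lt hi') (τ.injective (he.trans h.symm))

lemma recCount_eq (τ : Equiv.Perm (Fin (n + 1))) :
    recCount τ = recCount (down τ) + if τ (Fin.last n) = 0 then 1 else 0 := by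
  unfold recCount
  rw [Finset.card_filter, Finset.card_filter, Fin.sum_univ_castSucc]
  congr 1
  · exact Finset.sum_congr rfl fun i _ => if_congr (rec_castSucc_iff τ i) rfl rfl
  · exact if_congr (rec_last_iff τ) rfl rfl

/-- the decomposition equivalence. -/
noncomputable def FEquiv (n : ℕ) :
    Equiv.Perm (Fin (n + 1)) ≃ Fin (n + 1) × Equiv.Perm (Fin n) :=
  Equiv.ofBijective (fun τ => (τ (Fin.last n), down τ))
    ((Fintype.bijective_iff_injective_and_card _).mpr
      ⟨by
        intro τ τ' h
        have h1 : τ (Fin.last n) = τ' (Fin.last n) := congrArg Prod.fst h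
        have h2 : down τ = down τ' := congrArg Prod.snd h
        ext i
        refine Fin.lastCases ?_ ?_ i
        · exact congrArg Fin.val h1
        · intro i
          have := succAbove_down τ i
          rw [h1, h2, succAbove_down τ'] at this
          exact congrArg Fin.val this.symm,
      by simp [Fintype.card_perm, Nat.factorial_succ]⟩)

lemma FEquiv_symm_last (v : Fin (n + 1)) (σ : Equiv.Perm (Fin n)) :
    ((FEquiv n).symm (v, σ)) (Fin.last n) = v :=
  congrArg Prod.fst ((FEquiv n).apply_symm_apply (v, σ))

lemma FEquiv_symm_down (v : Fin (n + 1)) (σ : Equiv.Perm (Fin n)) :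
    down ((FEquiv n).symm (v, σ)) = σ :=
  congrArg Prod.snd ((FEquiv n).apply_symm_apply (v, σ))

lemma card_filter_perm_succ (P : Equiv.Perm (Fin (n + 1)) → Prop) [DecidablePred P] :
    (univ.filter P).card
      = ∑ v : Fin (n + 1),
          (univ.filter fun σ : Equiv.Perm (Fin n) => P ((FEquiv n).symm (v, σ))).card := by
  classical
  rw [← Fintype.card_subtype]
  rw [Fintype.card_congr (((FEquiv n).subtypeEquiv fun τ => by
    rw [Equiv.symm_apply_apply]).trans (Equiv.subtypeProdEquivSigmaSubtype
      fun v σ => P ((FEquiv n).symm (v, σ))))]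
  rw [Fintype.card_sigma]
  exact Finset.sum_congr rfl fun v _ => Fintype.card_subtype _

def permCount (n k : ℕ) : ℕ :=
  (univ.filter fun τ : Equiv.Perm (Fin n) => recCount τ = k).card

lemma permCount_succ (k : ℕ) :
    permCount (n + 1) k
      = (univ.filter fun σ : Equiv.Perm (Fin n) => recCount σ + 1 = k).card
        + n * permCount n k := by
  classical
  have hP : ∀ (v : Fin (n + 1)) (σ : Equiv.Perm (Fin n)),
      recCount ((FEquiv n).symm (v, σ)) = recCount σ + if v = 0 then 1 else 0 := fun v σ => by
    rw [recCount_eq, FEquiv_symm_last, FEquiv_symm_down]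
  rw [permCount, card_filter_perm_succ, Fin.sum_univ_succ]
  congr 1
  · congr 1
    exact Finset.filter_congr fun σ _ => by simp [hP]
  · calc ∑ i : Fin n,
        (univ.filter fun σ : Equiv.Perm (Fin n) =>
          recCount ((FEquiv n).symm (i.succ, σ)) = k).card
        = ∑ _i : Fin n, permCount n k := by
          refine Finset.sum_congr rfl fun i _ => ?_
          unfold permCount
          congr 1
          exact Finset.filter_congr fun σ _ => by simp [hP, Fin.succ_ne_zero]
      _ = n * permCount n k := by
          rw [Finset.sum_const, Finset.card_univ, Fintype.card_fin, smul_eq_mul]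

lemma card_last_eq_zero (k : ℕ) :
    (univ.filter fun τ : Equiv.Perm (Fin (n + 1)) =>
        τ (Fin.last n) = 0 ∧ recCount τ = k + 1).card = permCount n k := by
  classical
  have hP : ∀ (v : Fin (n + 1)) (σ : Equiv.Perm (Fin n)),
      recCount ((FEquiv n).symm (v, σ)) = recCount σ + if v = 0 then 1 else 0 := fun v σ => by
    rw [recCount_eq, FEquiv_symm_last, FEquiv_symm_down]
  rw [card_filter_perm_succ, Fin.sum_univ_succ]
  have h2 : ∀ i : Fin n,
      (univ.filter fun σ : Equiv.Perm (Fin n) =>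
        ((FEquiv n).symm (i.succ, σ)) (Fin.last n) = 0
          ∧ recCount ((FEquiv n).symm (i.succ, σ)) = k + 1).card = 0 := by
    intro i
    rw [Finset.card_eq_zero, Finset.filter_eq_empty_iff]
    intro σ _
    rw [FEquiv_symm_last]
    simp [Fin.succ_ne_zero]
  rw [Finset.sum_congr rfl fun i _ => h2 i, Finset.sum_const, smul_eq_mul, Nat.mul_zero,
    Nat.add_zero]
  unfold permCount
  congr 1
  exact Finset.filter_congr fun σ _ => by simp [hP, FEquiv_symm_last]

lemma permCount_eq_stirling (n k : ℕ) : permCount n k = stirlingFirst n k := by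
  induction n generalizing k with
  | zero =>
    cases k with
    | zero =>
      simp [permCount, recCount, stirlingFirst]
    | succ k =>
      simp [permCount, recCount, stirlingFirst]
  | succ n ih =>
    cases k with
    | zero =>
      rw [permCount_succ, ih]
      have h1 : (univ.filter fun σ : Equiv.Perm (Fin n) => recCount σ + 1 = 0).card = 0 := by
        rw [Finset.card_eq_zero, Finset.filter_eq_empty_iff]
        intro σ _
        omega
      rw [h1]
      cases n with
      | zero => rfl
      | succ n => rfl
    | succ k =>
      rw [permCount_succ, ih]
      have h1 : (univ.filter fun σ : Equiv.Perm (Fin n) => recCount σ + 1 = k + 1).card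
          = permCount n k := by
        unfold permCount
        congr 1
        exact Finset.filter_congr fun σ _ => by omega
      rw [h1, ih k]
      show stirlingFirst n k + n * stirlingFirst n (k + 1) = stirlingFirst (n + 1) (k + 1)
      rw [stirlingFirst]
      omega

lemma card_records (n k : ℕ) :
    (univ.filter fun τ : Equiv.Perm (Fin (n + 1)) =>
        (∀ i' < Fin.last n, τ (Fin.last n) < τ i') ∧ recCount τ = k + 1).card
      = stirlingFirst n k := by
  classical
  rw [← permCount_eq_stirling, ← card_last_eq_zero (n := n) k]
  congr 1
  exact Finset.filter_congr fun τ _ => by rw [rec_last_iff]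

end RecordAux

namespace RecordAux2

variable {j : ℕ}

/-- the event that `x ∘ f` is strictly increasing. -/
def Aset (f : Fin j → Fin j) : Set (Fin j → ℝ) := {x | StrictMono (x ∘ f)}

lemma measurableSet_Aset (f : Fin j → Fin j) : MeasurableSet (Aset f) := by
  have : Aset f = ⋂ (a : Fin j) (b : Fin j) (_ : a < b), {x : Fin j → ℝ | x (f a) < x (f b)} := by
    ext x
    simp only [Aset, Set.mem_iInter, Set.mem_setOf_eq]
    exact ⟨fun h a b hab => h hab, fun h a b hab => h a b hab⟩
  rw [this]
  exact MeasurableSet.iInter fun a => MeasurableSet.iInter fun b => MeasurableSet.iInter fun _ =>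
    measurableSet_lt (measurable_pi_apply _) (measurable_pi_apply _)

variable (ν : Measure ℝ) [IsProbabilityMeasure ν]

lemma Aset_measure_perm (σ : Equiv.Perm (Fin j)) :
    Measure.pi (fun _ : Fin j => ν) (Aset σ) = Measure.pi (fun _ : Fin j => ν) (Aset id) := by
  have key : ∀ e : Equiv.Perm (Fin j),
      Measure.pi (fun _ : Fin j => ν) (Aset ⇑e.symm) = Measure.pi (fun _ : Fin j => ν) (Aset id) := by
    intro e
    have hmp := MeasureTheory.measurePreserving_piCongrLeft (fun _ : Fin j => ν) (e : Fin j ≃ Fin j)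
    have hset : (MeasurableEquiv.piCongrLeft (fun _ : Fin j => ℝ) e) ⁻¹' (Aset id)
        = Aset ⇑e.symm := by
      ext x
      have hfun : (MeasurableEquiv.piCongrLeft (fun _ : Fin j => ℝ) e) x = x ∘ ⇑e.symm := by
        funext i
        conv_lhs => rw [show i = e (e.symm i) from (e.apply_symm_apply i).symm]
        rw [MeasurableEquiv.piCongrLeft_apply_apply]
        rfl
      simp only [Set.mem_preimage, Aset, Set.mem_setOf_eq, hfun]
      rfl
    rw [← hset]
    exact hmp.measure_preimage (measurableSet_Aset id).nullMeasurableSet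
  have := key σ.symm
  rwa [Equiv.symm_symm] at this

lemma Aset_disjoint : Pairwise fun σ σ' : Equiv.Perm (Fin j) =>
    Disjoint (Aset ⇑σ) (Aset ⇑σ') := by
  intro σ σ' hne
  rw [Set.disjoint_left]
  intro x hx hx'
  apply hne
  have hxinj : Function.Injective x := by
    intro a b hab
    have h1 : (x ∘ ⇑σ) (σ.symm a) = (x ∘ ⇑σ) (σ.symm b) := by
      simp only [Function.comp_apply, Equiv.apply_symm_apply, hab]
    have h2 := hx.injective h1
    simpa using congrArg σ h2
  haveI : WellFoundedLT (Fin j) := Finite.to_wellFoundedLT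
  have hcomp : x ∘ ⇑σ = x ∘ ⇑σ' := by
    apply hx.range_inj hx' |>.mp
    rw [Set.range_comp, Set.range_comp, Equiv.range_eq_univ, Equiv.range_eq_univ]
  ext i
  exact congrArg Fin.val (hxinj (congrFun hcomp i))

lemma injective_subset_iUnion_Aset :
    {x : Fin j → ℝ | Function.Injective x} ⊆ ⋃ σ : Equiv.Perm (Fin j), Aset ⇑σ := by
  intro x hx
  refine Set.mem_iUnion.mpr ⟨Tuple.sort x, ?_⟩
  exact (Tuple.monotone_sort x).strictMono_of_injective (hx.comp (Tuple.sort x).injective)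

end RecordAux2

/-- In an i.i.d. sequence from a continuous (atomless) distribution, the probability that
the `m`-th (lower) record occurs at trial `j` is `c(j-1, m-1)/j!`, for `j ≥ m ≥ 1`.
Trial `j` corresponds to index `j-1`; observation `i` is a record when it is strictly
smaller than all previous observations. -/
theorem record_time_pmf
    {Ω : Type*} [MeasurableSpace Ω] (μ : Measure Ω) [IsProbabilityMeasure μ]
    (X : ℕ → Ω → ℝ) (hX : ∀ i, Measurable (X i))
    (ν : Measure ℝ) [NullSingletonClass ν]
    (hid : ∀ i, μ.map (X i) = ν)
    (hind : iIndepFun X μ)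
    (m j : ℕ) (hm : 1 ≤ m) (hj : m ≤ j) :
    μ {ω | (∀ i < j - 1, X (j - 1) ω < X i ω) ∧
        ((Finset.range j).filter (fun i => ∀ i' < i, X i ω < X i' ω)).card = m} =
      ENNReal.ofReal (stirlingFirst (j - 1) (m - 1) / Nat.factorial j) := by
  classical
  have hj1 : 1 ≤ j := hm.trans hj
  obtain ⟨n, rfl⟩ : ∃ n, j = n + 1 := ⟨j - 1, by omega⟩
  obtain ⟨k, rfl⟩ : ∃ k, m = k + 1 := ⟨m - 1, by omega⟩
  simp only [Nat.add_sub_cancel]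
  haveI : IsProbabilityMeasure ν := hid 0 ▸ Measure.isProbabilityMeasure_map (hX 0).aemeasurable
  set P : Measure (Fin (n + 1) → ℝ) := Measure.pi (fun _ => ν) with hPdef
  set Y : Ω → (Fin (n + 1) → ℝ) := fun ω i => X i ω with hYdef
  have hYm : Measurable Y := measurable_pi_lambda _ fun i => hX i
  -- the joint law is the product measure
  have hY : μ.map Y = P := by
    refine (Measure.pi_eq fun s hs => ?_).symm
    rw [Measure.map_apply hYm (MeasurableSet.univ_pi hs)]
    set S : ℕ → Set ℝ := fun i => if h : i < n + 1 then s ⟨i, h⟩ else Set.univ with hSdef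
    have hSm : ∀ i, MeasurableSet (S i) := by
      intro i
      by_cases h : i < n + 1
      · simpa only [hSdef, dif_pos h] using hs ⟨i, h⟩
      · simp only [hSdef, dif_neg h, MeasurableSet.univ]
    have hpre : Y ⁻¹' Set.pi Set.univ s = ⋂ i ∈ Finset.range (n + 1), X i ⁻¹' S i := by
      ext ω
      simp only [Set.mem_preimage, Set.mem_pi, Set.mem_univ, forall_true_left, Set.mem_iInter,
        Finset.mem_range]
      constructor
      · intro h i hi
        simp only [hSdef, Set.mem_preimage, dif_pos hi]
        exact h ⟨i, hi⟩
      · intro h i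
        have := h i.val i.isLt
        simpa only [hSdef, Set.mem_preimage, dif_pos i.isLt, Fin.eta] using this
    rw [hpre, hind.measure_inter_preimage_eq_mul (Finset.range (n + 1)) (fun i _ => hSm i),
      ← Fin.prod_univ_eq_prod_range (fun i => μ (X i ⁻¹' S i)) (n + 1)]
    refine Finset.prod_congr rfl fun i _ => ?_
    have h1 : S i.val = s i := by simp only [hSdef, dif_pos i.isLt, Fin.eta]
    rw [h1, ← hid i.val, Measure.map_apply (hX i.val) (hs i)]
  -- ties are null
  have htie : ∀ a b : Fin (n + 1), a ≠ b → μ (Y ⁻¹' {x | x a = x b}) = 0 := by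
    intro a b hab
    have hpre : Y ⁻¹' {x | x a = x b} = (fun ω => (X a ω, X b ω)) ⁻¹' {p : ℝ × ℝ | p.1 = p.2} := rfl
    have hdiag : MeasurableSet {p : ℝ × ℝ | p.1 = p.2} :=
      measurableSet_eq_fun measurable_fst measurable_snd
    have hint : IndepFun (X a) (X b) μ :=
      hind.indepFun (fun h => hab (Fin.val_injective h))
    have hmap := (indepFun_iff_map_prod_eq_prod_map_map (hX a).aemeasurable
      (hX b).aemeasurable).mp hint
    rw [hpre, ← Measure.map_apply ((hX a).prodMk (hX b)) hdiag, hmap, hid, hid,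
      Measure.prod_apply hdiag]
    have hz : ∀ x : ℝ, ν (Prod.mk x ⁻¹' {p : ℝ × ℝ | p.1 = p.2}) = 0 := by
      intro x
      have : Prod.mk x ⁻¹' {p : ℝ × ℝ | p.1 = p.2} = {x} := by ext y; simp [eq_comm]
      rw [this]
      exact measure_singleton x
    simp [hz]
  set N : Set (Fin (n + 1) → ℝ) := ⋃ (a : Fin (n + 1)) (b : Fin (n + 1)) (_ : a ≠ b),
    {x | x a = x b} with hNdef
  have hNm : MeasurableSet N :=
    MeasurableSet.iUnion fun a => MeasurableSet.iUnion fun b => MeasurableSet.iUnion fun _ =>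
      measurableSet_eq_fun (measurable_pi_apply a) (measurable_pi_apply b)
  have hPN : P N = 0 := by
    rw [← hY, Measure.map_apply hYm hNm]
    simp only [hNdef, Set.preimage_iUnion]
    exact measure_iUnion_null fun a => measure_iUnion_null fun b =>
      measure_iUnion_null fun hab => htie a b hab
  have hUc : ∀ x : Fin (n + 1) → ℝ,
      x ∉ (⋃ σ : Equiv.Perm (Fin (n + 1)), RecordAux2.Aset ⇑σ) → x ∈ N := by
    intro x hx
    by_cases hinj : Function.Injective x
    · exact absurd (RecordAux2.injective_subset_iUnion_Aset hinj) hx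
    · obtain ⟨a, b, heq, hne⟩ := Function.not_injective_iff.mp hinj
      exact Set.mem_iUnion.mpr ⟨a, Set.mem_iUnion.mpr ⟨b, Set.mem_iUnion.mpr ⟨hne, heq⟩⟩⟩
  set U : Set (Fin (n + 1) → ℝ) := ⋃ σ : Equiv.Perm (Fin (n + 1)), RecordAux2.Aset ⇑σ with hUdef
  have hUm : MeasurableSet U :=
    MeasurableSet.iUnion fun σ => RecordAux2.measurableSet_Aset _
  have hU1 : P U = 1 := by
    have hle : (1 : ℝ≥0∞) ≤ P U + P N := by
      have hsub : (Set.univ : Set (Fin (n + 1) → ℝ)) ⊆ U ∪ N := by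
        intro x _
        by_cases hmem : x ∈ U
        · exact Or.inl hmem
        · exact Or.inr (hUc x hmem)
      calc (1 : ℝ≥0∞) = P Set.univ := measure_univ.symm
        _ ≤ P (U ∪ N) := measure_mono hsub
        _ ≤ P U + P N := measure_union_le _ _
    rw [hPN, add_zero] at hle
    exact le_antisymm prob_le_one hle
  have hsum : ∑ σ : Equiv.Perm (Fin (n + 1)), P (RecordAux2.Aset ⇑σ) = 1 := by
    have h := measure_iUnion (μ := P) RecordAux2.Aset_disjoint
      (fun σ : Equiv.Perm (Fin (n + 1)) => RecordAux2.measurableSet_Aset ⇑σ)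
    rw [tsum_fintype] at h
    rw [← h]
    exact hU1
  have hAval : ∀ σ : Equiv.Perm (Fin (n + 1)),
      P (RecordAux2.Aset ⇑σ) = (((n + 1).factorial : ℝ≥0∞))⁻¹ := by
    have hconst : ∀ σ' : Equiv.Perm (Fin (n + 1)),
        P (RecordAux2.Aset ⇑σ') = P (RecordAux2.Aset (id : Fin (n + 1) → Fin (n + 1))) :=
      fun σ' => RecordAux2.Aset_measure_perm ν σ'
    have hs2 : ((n + 1).factorial : ℝ≥0∞) * P (RecordAux2.Aset (id : Fin (n + 1) → Fin (n + 1)))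
        = 1 := by
      have hh : ∑ σ' : Equiv.Perm (Fin (n + 1)), P (RecordAux2.Aset ⇑σ')
          = (Fintype.card (Equiv.Perm (Fin (n + 1))))
              • P (RecordAux2.Aset (id : Fin (n + 1) → Fin (n + 1))) := by
        rw [Finset.sum_congr rfl fun σ' _ => hconst σ', Finset.sum_const, Finset.card_univ]
      rw [hh, Fintype.card_perm, Fintype.card_fin, nsmul_eq_mul] at hsum
      exact_mod_cast hsum
    intro σ
    have hne : ((n + 1).factorial : ℝ≥0∞) ≠ 0 := Nat.cast_ne_zero.mpr (Nat.factorial_ne_zero _)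
    have hnt : ((n + 1).factorial : ℝ≥0∞) ≠ ⊤ := ENNReal.natCast_ne_top _
    rw [hconst σ]
    calc P (RecordAux2.Aset (id : Fin (n + 1) → Fin (n + 1)))
        = (((n + 1).factorial : ℝ≥0∞))⁻¹
            * (((n + 1).factorial : ℝ≥0∞)
              * P (RecordAux2.Aset (id : Fin (n + 1) → Fin (n + 1)))) := by
          rw [← mul_assoc, ENNReal.inv_mul_cancel hne hnt, one_mul]
      _ = (((n + 1).factorial : ℝ≥0∞))⁻¹ := by rw [hs2, mul_one]
  -- the event, as a set of tuples
  set E' : Set (Fin (n + 1) → ℝ) := {x | (∀ i : Fin (n + 1), i < Fin.last n → x (Fin.last n) < x i)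
    ∧ (univ.filter fun i : Fin (n + 1) => ∀ i' < i, x i < x i').card = k + 1} with hE'def
  have hE'm : MeasurableSet E' := by
    have h1 : MeasurableSet {x : Fin (n + 1) → ℝ |
        ∀ i : Fin (n + 1), i < Fin.last n → x (Fin.last n) < x i} := by
      have : {x : Fin (n + 1) → ℝ | ∀ i : Fin (n + 1), i < Fin.last n → x (Fin.last n) < x i}
          = ⋂ (i : Fin (n + 1)) (_ : i < Fin.last n), {x | x (Fin.last n) < x i} := by
        ext x; simp
      rw [this]
      exact MeasurableSet.iInter fun i => MeasurableSet.iInter fun _ =>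
        measurableSet_lt (measurable_pi_apply _) (measurable_pi_apply _)
    have h2 : MeasurableSet {x : Fin (n + 1) → ℝ |
        (univ.filter fun i : Fin (n + 1) => ∀ i' < i, x i < x i').card = k + 1} := by
      have hg : Measurable (fun x : Fin (n + 1) → ℝ =>
          (univ.filter fun i : Fin (n + 1) => ∀ i' < i, x i < x i').card) := by
        have hrw : (fun x : Fin (n + 1) → ℝ =>
            (univ.filter fun i : Fin (n + 1) => ∀ i' < i, x i < x i').card)
            = fun x => ∑ i : Fin (n + 1), if (∀ i' < i, x i < x i') then 1 else 0 := by
          funext x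
          rw [Finset.card_filter]
        rw [hrw]
        refine Finset.measurable_sum _ fun i _ => Measurable.ite ?_ measurable_const
          measurable_const
        have : {x : Fin (n + 1) → ℝ | ∀ i' < i, x i < x i'}
            = ⋂ (i' : Fin (n + 1)) (_ : i' < i), {x | x i < x i'} := by
          ext x; simp
        rw [show (fun x : Fin (n + 1) → ℝ => ∀ i' < i, x i < x i')
          = {x : Fin (n + 1) → ℝ | ∀ i' < i, x i < x i'} from rfl, this]
        exact MeasurableSet.iInter fun i' => MeasurableSet.iInter fun _ =>
          measurableSet_lt (measurable_pi_apply _) (measurable_pi_apply _)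
      exact hg (measurableSet_singleton (k + 1))
    exact h1.inter h2
  -- the event in Ω is the pullback of E'
  have hcard : ∀ ω, ((range (n + 1)).filter fun i => ∀ i' < i, X i ω < X i' ω).card
      = (univ.filter fun i : Fin (n + 1) => ∀ i' < i, Y ω i < Y ω i').card := by
    intro ω
    rw [← Nat.Iio_eq_range, ← Fin.map_valEmbedding_univ, Finset.filter_map, Finset.card_map]
    congr 1
    refine Finset.filter_congr fun i _ => ?_
    constructor
    · intro h i' hi'
      exact h i'.val hi'
    · intro h i' hi'
      have hb : i' < n + 1 := lt_trans hi' i.isLt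
      exact h ⟨i', hb⟩ hi'
  have hset : {ω | (∀ i < n, X n ω < X i ω)
        ∧ ((range (n + 1)).filter fun i => ∀ i' < i, X i ω < X i' ω).card = k + 1}
      = Y ⁻¹' E' := by
    ext ω
    simp only [Set.mem_setOf_eq, Set.mem_preimage, hE'def]
    apply and_congr
    · constructor
      · intro h i hi
        exact h i.val (by simpa [Fin.lt_iff_val_lt_val] using hi)
      · intro h i hi
        exact h ⟨i, by omega⟩ (by simp [Fin.lt_iff_val_lt_val]; omega)
    · rw [hcard ω]
  rw [hset, ← Measure.map_apply hYm hE'm, hY]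
  -- membership of E' on a sorted block depends only on the sorting permutation
  set Good : Equiv.Perm (Fin (n + 1)) → Prop := fun σ =>
    (∀ i < Fin.last n, σ.symm (Fin.last n) < σ.symm i)
      ∧ (univ.filter fun i : Fin (n + 1) => ∀ i' < i, σ.symm i < σ.symm i').card = k + 1
    with hGooddef
  have key : ∀ (σ : Equiv.Perm (Fin (n + 1))) (x : Fin (n + 1) → ℝ),
      x ∈ RecordAux2.Aset ⇑σ → (x ∈ E' ↔ Good σ) := by
    intro σ x hx
    have hlt : ∀ a b : Fin (n + 1), x a < x b ↔ σ.symm a < σ.symm b := by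
      intro a b
      have h := hx.lt_iff_lt (a := σ.symm a) (b := σ.symm b)
      simpa only [Function.comp_apply, Equiv.apply_symm_apply] using h
    simp only [hE'def, hGooddef, Set.mem_setOf_eq]
    apply and_congr
    · exact forall_congr' fun i => imp_congr Iff.rfl (hlt _ _)
    · rw [Finset.filter_congr fun i (_ : i ∈ univ) =>
        forall_congr' fun i' => imp_congr Iff.rfl (hlt _ _)]
  have hEA : ∀ σ : Equiv.Perm (Fin (n + 1)),
      E' ∩ RecordAux2.Aset ⇑σ = if Good σ then RecordAux2.Aset ⇑σ else ∅ := by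
    intro σ
    split_ifs with hg
    · ext x
      exact ⟨fun h => h.2, fun hx => ⟨(key σ x hx).mpr hg, hx⟩⟩
    · ext x
      simp only [Set.mem_inter_iff, Set.mem_empty_iff_false, iff_false, not_and]
      exact fun h1 h2 => hg ((key σ x h2).mp h1)
  -- split the measure of E' over the sorted blocks
  have hsplit : P E' = ((univ.filter Good).card : ℝ≥0∞) * (((n + 1).factorial : ℝ≥0∞))⁻¹ := by
    have hdiff : P (E' \ U) = 0 :=
      measure_mono_null (fun x hx => hUc x hx.2) hPN
    have hEU : P E' = P (E' ∩ U) := by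
      have := measure_inter_add_diff (μ := P) E' hUm
      rw [hdiff, add_zero] at this
      exact this.symm
    have hinter : E' ∩ U = ⋃ σ : Equiv.Perm (Fin (n + 1)), E' ∩ RecordAux2.Aset ⇑σ := by
      rw [hUdef, Set.inter_iUnion]
    have hdisj : Pairwise (Function.onFun Disjoint
        fun σ : Equiv.Perm (Fin (n + 1)) => E' ∩ RecordAux2.Aset ⇑σ) := fun σ σ' hne =>
      (RecordAux2.Aset_disjoint hne).mono Set.inter_subset_right Set.inter_subset_right
    have hiu := measure_iUnion (μ := P) hdisj
      (fun σ : Equiv.Perm (Fin (n + 1)) => hE'm.inter (RecordAux2.measurableSet_Aset ⇑σ))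
    rw [hEU, hinter, hiu, tsum_fintype]
    have hterm : ∀ σ : Equiv.Perm (Fin (n + 1)),
        P (E' ∩ RecordAux2.Aset ⇑σ)
          = if Good σ then (((n + 1).factorial : ℝ≥0∞))⁻¹ else 0 := by
      intro σ
      rw [hEA σ]
      split_ifs with hg
      · exact hAval σ
      · exact measure_empty
    rw [Finset.sum_congr rfl fun σ _ => hterm σ, Finset.sum_ite, Finset.sum_const,
      Finset.sum_const_zero, add_zero, nsmul_eq_mul]
  rw [hsplit]
  -- count the good permutations
  have hcount : (univ.filter Good).card = stirlingFirst n k := by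
    rw [← RecordAux.card_records n k]
    refine Finset.card_bij' (fun σ _ => σ.symm) (fun τ _ => τ.symm) ?_ ?_ ?_ ?_
    · intro σ hσ
      rw [Finset.mem_filter] at hσ ⊢
      exact ⟨Finset.mem_univ _, hσ.2⟩
    · intro τ hτ
      rw [Finset.mem_filter] at hτ ⊢
      refine ⟨Finset.mem_univ _, ?_⟩
      simpa [hGooddef, RecordAux.recCount] using hτ.2
    · intro σ _
      exact Equiv.symm_symm σ
    · intro τ _
      exact Equiv.symm_symm τ
  rw [hcount]
  -- final arithmetic
  rw [div_eq_mul_inv, ENNReal.ofReal_mul (by positivity), ENNReal.ofReal_inv_of_pos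
    (by positivity), ENNReal.ofReal_natCast, ENNReal.ofReal_natCast]
end
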